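/- Let D be a rich domain that is a decomposable domain. Then for each s ∈ M, the graph G_≈^{A^s} — whose vertices are the elements of A^s and whose edges join strongly connected elements of the induced marginal domain [D]^s — is a connected graph. -/

import Mathlib

noncomputable section

universe u

/-- A (strict) preference: a complete, antisymmetric, transitive binary relation,
i.e. a strict linear order, on `α`.  `rel a b` reads "`a` is strictly preferred to `b`". -/
structure Pref (α : Type u) : Type u where
  rel : α → α → Prop
  asymm : ∀ a b, rel a b → ¬ rel b a
  trans : ∀ a b c, rel a b → rel b c → rel a c
  total : ∀ a b, a ≠ b → rel a b ∨ rel b a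

namespace Pref

variable {α : Type u}

theorem exists_top [Finite α] [Nonempty α] (P : Pref α) :
    ∃ a : α, ∀ b, b ≠ a → P.rel a b := by
  haveI : IsTrans α P.rel := ⟨P.trans⟩
  haveI : IsIrrefl α P.rel := ⟨fun a h => P.asymm a a h h⟩
  obtain ⟨a, -, ha⟩ :=
    (Finite.wellFounded_of_trans_of_irrefl P.rel).has_min Set.univ
      ⟨Classical.arbitrary α, trivial⟩
  refine ⟨a, fun b hb => ?_⟩
  rcases P.total a b (fun h => hb h.symm) with h | h
  · exact h
  · exact absurd h (ha b trivial)

/-- The top-ranked alternative `r₁(P)` of a preference. -/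
def top [Finite α] [Nonempty α] (P : Pref α) : α := P.exists_top.choose

theorem top_spec [Finite α] [Nonempty α] (P : Pref α) :
    ∀ b, b ≠ P.top → P.rel P.top b := P.exists_top.choose_spec

/-- `rank P a = k` means that `a` is the `k`-th ranked alternative `r_k(P)`. -/
def rank (P : Pref α) (a : α) : ℕ := {b | P.rel b a}.ncard + 1

/-- The induced marginal preference `[P]^s` on component `s`:
derived from `P` by referring to the off-`s` components of the top alternative. -/
def marg {m : ℕ} {A : Fin m → Type u} [∀ s, Fintype (A s)] [∀ s, Nonempty (A s)]
    (P : Pref (∀ s, A s)) (s : Fin m) : Pref (A s) where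
  rel x y := P.rel (Function.update P.top s x) (Function.update P.top s y)
  asymm _ _ h := P.asymm _ _ h
  trans _ _ _ h₁ h₂ := P.trans _ _ _ h₁ h₂
  total x y hxy := P.total _ _ fun h => hxy (by
    have := congrFun h s
    simpa using this)

end Pref

section SocialChoice

variable {m : ℕ} {A : Fin m → Type u}

/-- `a` and `b` are similar, differing exactly in component `s`: `M(a,b) = {s}`. -/
def SimilarAt (a b : ∀ s, A s) (s : Fin m) : Prop :=
  a s ≠ b s ∧ ∀ t, t ≠ s → a t = b t

/-- The "slice" `(A^s, x^{-s})` of alternatives agreeing with `x` off component `s`. -/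
def Slice (s : Fin m) (x : ∀ t, A t) : Set (∀ t, A t) :=
  {a | ∀ t, t ≠ s → a t = x t}

variable [∀ s, Fintype (A s)] [∀ s, Nonempty (A s)]

/-- The induced marginal domain `[D]^s`. -/
def margDomain (D : Set (Pref (∀ s, A s))) (s : Fin m) : Set (Pref (A s)) :=
  (fun P => Pref.marg P s) '' D

/-- A preference is minimal-richness witnessed: every alternative is some preference's top. -/
def MinimallyRich (D : Set (Pref (∀ s, A s))) : Prop :=
  ∀ a : ∀ s, A s, ∃ P ∈ D, Pref.top P = a

/-- A separable preference. -/
def Separable (P : Pref (∀ s, A s)) : Prop :=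
  ∃ Q : ∀ s, Pref (A s), ∀ (s : Fin m) (a b : ∀ t, A t),
    SimilarAt a b s → (Q s).rel (a s) (b s) → P.rel a b

/-- A top-separable preference. -/
def TopSeparable (P : Pref (∀ s, A s)) : Prop :=
  ∀ (s : Fin m) (a b : ∀ t, A t), SimilarAt a b s → a s = Pref.top P s → P.rel a b

end SocialChoice

/-- Two preferences are complete reversals. -/
def CompleteReversals {α : Type u} (P P' : Pref α) : Prop :=
  ∀ a b, P.rel a b ↔ P'.rel b a

section SCFProps

variable {β : Type u}

/-- Unanimity of a (marginal) social choice function on domain `E`. -/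
def Unanimous [Finite β] [Nonempty β] (E : Set (Pref β)) {n : ℕ}
    (f : (Fin n → E) → β) : Prop :=
  ∀ (p : Fin n → E) (a : β), (∀ i, Pref.top (p i).1 = a) → f p = a

/-- Strategy-proofness of a (marginal) social choice function on domain `E`. -/
def StrategyProof (E : Set (Pref β)) {n : ℕ} (f : (Fin n → E) → β) : Prop :=
  ∀ (p : Fin n → E) (i : Fin n) (Q : E),
    f p ≠ f (Function.update p i Q) →
    (p i).1.rel (f p) (f (Function.update p i Q))

/-- The tops-only property. -/
def TopsOnly [Finite β] [Nonempty β] (E : Set (Pref β)) {n : ℕ}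
    (f : (Fin n → E) → β) : Prop :=
  ∀ p p' : Fin n → E, (∀ i, Pref.top (p i).1 = Pref.top (p' i).1) → f p = f p'

end SCFProps

section Decomp

variable {m : ℕ} {A : Fin m → Type u} [∀ s, Fintype (A s)] [∀ s, Nonempty (A s)]

/-- The profile of induced marginal preferences `([P₁]^s, …, [Pₙ]^s)`. -/
def margProfile (D : Set (Pref (∀ s, A s))) (s : Fin m) {n : ℕ}
    (p : Fin n → D) : Fin n → (margDomain D s) :=
  fun i => ⟨Pref.marg (p i).1 s, ⟨(p i).1, (p i).2, rfl⟩⟩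

/-- `f` is decomposed by the family of marginal SCFs `g`. -/
def Decomposable (D : Set (Pref (∀ s, A s))) {n : ℕ}
    (f : (Fin n → D) → (∀ s, A s))
    (g : ∀ s : Fin m, (Fin n → (margDomain D s)) → A s) : Prop :=
  ∀ p : Fin n → D, ∀ s, f p s = g s (margProfile D s p)

/-- A decomposable domain: for every `n ≥ 2` and every SCF, being a strategy-proof
unanimous rule is equivalent to being decomposable into strategy-proof unanimous
marginal rules. -/
def DecomposableDomain (D : Set (Pref (∀ s, A s))) : Prop :=
  ∀ n : ℕ, 2 ≤ n → ∀ f : (Fin n → D) → (∀ s, A s),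
    (Unanimous D f ∧ StrategyProof D f) ↔
      ∃ g : ∀ s : Fin m, (Fin n → (margDomain D s)) → A s,
        Decomposable D f g ∧
        ∀ s, Unanimous (margDomain D s) (g s) ∧ StrategyProof (margDomain D s) (g s)

/-- Diversity⁺: `D` contains two separable preferences that are complete reversals. -/
def DiversityPlus (D : Set (Pref (∀ s, A s))) : Prop :=
  ∃ P ∈ D, ∃ P' ∈ D, Separable P ∧ Separable P' ∧ CompleteReversals P P'

end Decomp

/-- Adjacency of two preferences: they coincide except that two alternatives ranked
consecutively in `P` occupy the same two positions in reversed order in `P'`. -/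
def Adjacent {β : Type u} (P P' : Pref β) : Prop :=
  ∃ a b : β, a ≠ b ∧
    P.rank b = P.rank a + 1 ∧ P'.rank b = P.rank a ∧ P'.rank a = P.rank a + 1 ∧
    ∀ c, c ≠ a → c ≠ b → P.rank c = P'.rank c

section AdjPlus

variable {m : ℕ} {A : Fin m → Type u} [∀ s, Fintype (A s)] [∀ s, Nonempty (A s)]

/-- Adjacency⁺ of two (separable) preferences. -/
def AdjacentPlus (P P' : Pref (∀ s, A s)) : Prop :=
  Separable P ∧ Separable P' ∧
  ∃ (s : Fin m) (a b : A s), a ≠ b ∧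
    (∀ z : ∀ t, A t,
      P.rank (Function.update z s b) = P.rank (Function.update z s a) + 1 ∧
      P'.rank (Function.update z s b) = P.rank (Function.update z s a) ∧
      P'.rank (Function.update z s a) = P.rank (Function.update z s a) + 1) ∧
    ∀ c : ∀ t, A t, c s ≠ a → c s ≠ b → P.rank c = P'.rank c

/-- Edges of the graph `G_{~/~⁺}`: adjacency or adjacency⁺. -/
def AdjEdge (P P' : Pref (∀ s, A s)) : Prop :=
  Adjacent P P' ∨ AdjacentPlus P P'

end AdjPlus

/-- A path in a graph with edge relation `edge` and vertex set `S`, connecting `x` to `y`. -/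
def IsPath {β : Type u} (edge : β → β → Prop) (S : Set β) (x y : β)
    (l : List β) : Prop :=
  2 ≤ l.length ∧ l.Nodup ∧ l.head? = some x ∧ l.getLast? = some y ∧
    (∀ z ∈ l, z ∈ S) ∧ List.Chain' edge l

/-- A path of preferences has `{a,b}`-restoration if the relative ranking of `a` and `b`
flips more than once along the path. -/
def HasRestoration {β : Type u} (l : List (Pref β)) (a b : β) : Prop :=
  ∃ o p q : Fin l.length, o < p ∧ p < q ∧
    (((l.get o).rel a b ∧ (l.get p).rel b a ∧ (l.get q).rel a b) ∨
     ((l.get o).rel b a ∧ (l.get p).rel a b ∧ (l.get q).rel b a))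

section RichDom

variable {m : ℕ} {A : Fin m → Type u} [∀ s, Fintype (A s)] [∀ s, Nonempty (A s)]

/-- The Interior⁺ property. -/
def InteriorPlus (D : Set (Pref (∀ s, A s))) : Prop :=
  ∀ P ∈ D, ∀ P' ∈ D, P ≠ P' → Pref.top P = Pref.top P' →
    ∃ l : List (Pref (∀ s, A s)),
      IsPath AdjEdge D P P' l ∧ ∀ Q ∈ l, Pref.top Q = Pref.top P

/-- The Exterior⁺ property (including the no-detour condition). -/
def ExteriorPlus (D : Set (Pref (∀ s, A s))) : Prop :=
  ∀ P ∈ D, ∀ P' ∈ D, Pref.top P ≠ Pref.top P' →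
    (∀ a b : ∀ s, A s, ∃ l : List (Pref (∀ s, A s)),
        IsPath AdjEdge D P P' l ∧ ¬ HasRestoration l a b) ∧
    ∀ s : Fin m, SimilarAt (Pref.top P) (Pref.top P') s →
      ∃ l : List (Pref (∀ s, A s)),
        IsPath AdjEdge D P P' l ∧ ∀ Q ∈ l, ∀ t, t ≠ s → Pref.top Q t = Pref.top P t

/-- A rich domain: minimally rich, diversity⁺, Interior⁺ and Exterior⁺. -/
def RichDomain (D : Set (Pref (∀ s, A s))) : Prop :=
  MinimallyRich D ∧ DiversityPlus D ∧ InteriorPlus D ∧ ExteriorPlus D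

end RichDom

/-- The weak interval `⟨x,y⟩` w.r.t. a linear order. -/
def wInterval {β : Type u} (lin : LinearOrder β) (x y : β) : Set β :=
  {z | (lin.le x z ∧ lin.le z y) ∨ (lin.le y z ∧ lin.le z x)}

/-- The strict (open) interval `Int⟨x,y⟩` w.r.t. a linear order. -/
def sInterval {β : Type u} (lin : LinearOrder β) (x y : β) : Set β :=
  {z | (lin.lt x z ∧ lin.lt z y) ∨ (lin.lt y z ∧ lin.lt z x)}

/-- `x` and `y` are marginal thresholds w.r.t. `lin`. -/
def MarginalThresholds {β : Type u} (lin : LinearOrder β) (x y : β) : Prop :=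
  x = y ∨ (x ≠ y ∧ 3 ≤ (wInterval lin x y).ncard)

/-- `x` and `y` are strongly connected in the marginal domain `E`: `x ≈ y`. -/
def StronglyConnected {β : Type u} (E : Set (Pref β)) (x y : β) : Prop :=
  ∃ Q ∈ E, ∃ Q' ∈ E,
    Pref.rank Q x = 1 ∧ Pref.rank Q y = 2 ∧ Pref.rank Q' y = 1 ∧ Pref.rank Q' x = 2 ∧
    ∀ z, z ≠ x → z ≠ y → Pref.rank Q z = Pref.rank Q' z

/-- Edges of the graph `G_≈`. -/
def scEdge {β : Type u} (E : Set (Pref β)) (x y : β) : Prop :=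
  x ≠ y ∧ StronglyConnected E x y

/-- The graph with edge relation `edge` on vertex set `B` is connected. -/
def GraphConnectedOn {β : Type u} (edge : β → β → Prop) (B : Set β) : Prop :=
  ∀ x ∈ B, ∀ y ∈ B, x ≠ y → ∃ l : List β, IsPath edge B x y l

/-- `v` is a leaf of the graph with edge relation `edge` on vertex set `B`:
it has a unique neighbor. -/
def IsLeaf {β : Type u} (edge : β → β → Prop) (B : Set β) (v : β) : Prop :=
  v ∈ B ∧ ∃! w, w ∈ B ∧ edge v w

/-- A hybrid marginal preference on `lin` w.r.t. marginal thresholds `ylo`, `yhi`. -/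
def HybridPref {β : Type u} [Finite β] [Nonempty β] (lin : LinearOrder β)
    (ylo yhi : β) (Q : Pref β) : Prop :=
  ∀ a b : β, a ≠ b → a ∈ sInterval lin (Pref.top Q) b →
    a ∉ sInterval lin ylo yhi → Q.rel a b

section MDH

variable {m : ℕ} {A : Fin m → Type u} [∀ s, Fintype (A s)] [∀ s, Nonempty (A s)]

/-- `xlo` and `xhi` are thresholds: marginal thresholds on every component. -/
def Thresholds (prec : ∀ s, LinearOrder (A s)) (xlo xhi : ∀ s, A s) : Prop :=
  ∀ s, MarginalThresholds (prec s) (xlo s) (xhi s)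

/-- A multidimensional hybrid preference on `≺ = ∏ prec s` w.r.t. thresholds `xlo`, `xhi`. -/
def MDHybrid (prec : ∀ s, LinearOrder (A s)) (xlo xhi : ∀ s, A s)
    (P : Pref (∀ s, A s)) : Prop :=
  ∀ (s : Fin m) (a b : ∀ t, A t), SimilarAt a b s →
    (a s = Pref.top P s → P.rel a b) ∧
    (a s ∈ sInterval (prec s) (Pref.top P s) (b s) →
      a s ∉ sInterval (prec s) (xlo s) (xhi s) → P.rel a b)

/-- A multidimensional single-peaked preference on `≺ = ∏ prec s`. -/
def MSP (prec : ∀ s, LinearOrder (A s)) (P : Pref (∀ s, A s)) : Prop :=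
  ∀ (s : Fin m) (a b : ∀ t, A t), SimilarAt a b s →
    a s ∈ wInterval (prec s) (Pref.top P s) (b s) → P.rel a b

/-- A multidimensional hybrid domain on `≺` w.r.t. thresholds `xlo`, `xhi`. -/
def MDHybridDomain (D : Set (Pref (∀ s, A s))) (prec : ∀ s, LinearOrder (A s))
    (xlo xhi : ∀ s, A s) : Prop :=
  Thresholds prec xlo xhi ∧
  (∀ P ∈ D, MDHybrid prec xlo xhi P) ∧
  ∀ s, GraphConnectedOn (scEdge (margDomain D s)) Set.univ ∧
    (xlo s ≠ xhi s →
      ∀ v, ¬ IsLeaf (scEdge (margDomain D s)) (wInterval (prec s) (xlo s) (xhi s)) v)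

/-- Strong connectedness⁺ of two alternatives: `a ≈⁺ b`. -/
def SCPlus (D : Set (Pref (∀ s, A s))) (a b : ∀ s, A s) : Prop :=
  ∃ P ∈ D, ∃ P' ∈ D, Pref.top P = a ∧ Pref.top P' = b ∧ AdjacentPlus P P'

end MDH

/-- The outcome of the fixed-ballot formula
`max_{J ⊆ N} ( min_{i ∈ J} ( r₁(Qᵢ), b_J ) )`. -/
def fbrValue {β : Type u} (lin : LinearOrder β) {n : ℕ} [Fintype β]
    (bal : Finset (Fin n) → β) (tops : Fin n → β) : β :=
  letI := lin
  letI : DecidableEq β := lin.toDecidableEq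
  Finset.univ.sup' ⟨∅, Finset.mem_univ _⟩
    fun J : Finset (Fin n) =>
      (insert (bal J) (J.image tops)).inf' (Finset.insert_nonempty _ _) id

/-- Fixed ballots: ballot unanimity and monotonicity. -/
def FBRBallots {β : Type u} [Fintype β] [Nonempty β] (lin : LinearOrder β) {n : ℕ}
    (bal : Finset (Fin n) → β) : Prop :=
  bal ∅ = @Finset.min' β lin Finset.univ Finset.univ_nonempty ∧
  bal Finset.univ = @Finset.max' β lin Finset.univ Finset.univ_nonempty ∧
  ∀ J J' : Finset (Fin n), J ⊂ J' → lin.le (bal J) (bal J')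

/-- A fixed ballot rule (FBR) on the linear order `lin`. -/
def IsFBR {β : Type u} [Fintype β] [Nonempty β] (lin : LinearOrder β)
    (E : Set (Pref β)) {n : ℕ} (f : (Fin n → E) → β) : Prop :=
  ∃ bal : Finset (Fin n) → β, FBRBallots lin bal ∧
    ∀ p : Fin n → E, f p = fbrValue lin bal fun i => Pref.top (p i).1

/-- An `(xlo, xhi)`-FBR: an FBR that additionally satisfies the
constrained-dictatorship condition. -/
def IsConstrainedFBR {β : Type u} [Fintype β] [Nonempty β] (lin : LinearOrder β)
    (xlo xhi : β) (E : Set (Pref β)) {n : ℕ} (f : (Fin n → E) → β) : Prop :=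
  ∃ bal : Finset (Fin n) → β, FBRBallots lin bal ∧
    (∀ p : Fin n → E, f p = fbrValue lin bal fun i => Pref.top (p i).1) ∧
    ∃ i : Fin n, ∀ J : Finset (Fin n),
      (i ∈ J → lin.le xhi (bal J)) ∧ (i ∉ J → lin.le (bal J) xlo)

section AuxRank

namespace Pref

variable {α : Type u}

theorem not_rel_self (P : Pref α) (a : α) : ¬ P.rel a a := fun h => P.asymm a a h h

theorem one_le_rank (P : Pref α) (a : α) : 1 ≤ P.rank a := Nat.le_add_left 1 _

theorem rank_lt_of_rel [Finite α] (P : Pref α) {a b : α} (h : P.rel a b) :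
    P.rank a < P.rank b := by
  have hsub : {c | P.rel c a} ⊆ {c | P.rel c b} := fun c hc => P.trans c a b hc h
  have hss : {c | P.rel c a} ⊂ {c | P.rel c b} :=
    (Set.ssubset_iff_of_subset hsub).2 ⟨a, h, P.not_rel_self a⟩
  have hlt := Set.ncard_lt_ncard hss (Set.toFinite _)
  simp only [Pref.rank]
  omega

theorem rel_of_rank_lt [Finite α] (P : Pref α) {a b : α} (h : P.rank a < P.rank b) :
    P.rel a b := by
  rcases eq_or_ne a b with rfl | hne
  · exact absurd h (lt_irrefl _)
  rcases P.total a b hne with h' | h'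
  · exact h'
  · exact absurd (P.rank_lt_of_rel h') (by omega)

theorem rel_iff_rank_lt [Finite α] (P : Pref α) (a b : α) :
    P.rel a b ↔ P.rank a < P.rank b := ⟨P.rank_lt_of_rel, P.rel_of_rank_lt⟩

theorem rank_injective [Finite α] (P : Pref α) {a b : α} (h : P.rank a = P.rank b) :
    a = b := by
  by_contra hne
  rcases P.total a b hne with h' | h' <;>
    · have := P.rank_lt_of_rel h'; omega

theorem rank_top [Finite α] [Nonempty α] (P : Pref α) : P.rank P.top = 1 := by
  have hset : {b | P.rel b P.top} = ∅ := by
    ext c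
    simp only [Set.mem_setOf_eq, Set.mem_empty_iff_false, iff_false]
    intro hc
    rcases eq_or_ne c P.top with rfl | hne
    · exact P.not_rel_self _ hc
    · exact P.asymm _ _ (P.top_spec c hne) hc
  simp [Pref.rank, hset]

theorem eq_top_of_rank_eq_one [Finite α] [Nonempty α] (P : Pref α) {a : α}
    (h : P.rank a = 1) : a = P.top :=
  P.rank_injective (h.trans P.rank_top.symm)

end Pref

end AuxRank

section AuxKey

variable {m : ℕ} {A : Fin m → Type u} [∀ s, Fintype (A s)] [∀ s, Nonempty (A s)]

theorem marg_rank (P : Pref (∀ s, A s)) (s : Fin m) (d : A s) :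
    (P.marg s).rank d =
      {e | P.rel (Function.update P.top s e) (Function.update P.top s d)}.ncard + 1 := rfl

theorem stepB {D : Set (Pref (∀ s, A s))} {s : Fin m} {P P' : Pref (∀ s, A s)}
    (hP : P ∈ D) (hP' : P' ∈ D) {a b : ∀ t, A t}
    (hta : P.top = a) (htb : P'.top = b)
    (hoff : ∀ t, t ≠ s → a t = b t) (hs : a s ≠ b s)
    (h1 : P.rank b = 2) (h2 : P'.rank a = 2)
    (h3 : ∀ c : ∀ t, A t, c s ≠ a s → c s ≠ b s → P.rank c = P'.rank c) :
    scEdge (margDomain D s) (a s) (b s) := by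
  have hab : a ≠ b := fun h => hs (congrFun h s)
  have hub : ∀ e, Function.update b s e = Function.update a s e := by
    intro e; funext t
    rcases eq_or_ne t s with rfl | ht
    · simp
    · rw [Function.update_of_ne ht, Function.update_of_ne ht]
      exact (hoff t ht).symm
  have hua : Function.update a s (a s) = a := Function.update_eq_self s a
  have hubb : Function.update a s (b s) = b := by
    funext t
    rcases eq_or_ne t s with rfl | ht
    · simp
    · rw [Function.update_of_ne ht]; exact hoff t ht
  have hus : ∀ e : A s, Function.update a s e s = e := fun e => Function.update_self s e a
  have hra : P.rank a = 1 := by rw [← hta]; exact P.rank_top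
  have hrb : P'.rank b = 1 := by rw [← htb]; exact P'.rank_top
  have hmargP : ∀ d, (P.marg s).rank d =
      {e | P.rel (Function.update a s e) (Function.update a s d)}.ncard + 1 := by
    intro d; rw [marg_rank, hta]
  have hmargP' : ∀ d, (P'.marg s).rank d =
      {e | P'.rel (Function.update a s e) (Function.update a s d)}.ncard + 1 := by
    intro d; rw [marg_rank, htb]; simp only [hub]
  have topP : ∀ c, c ≠ a → P.rel a c := by
    intro c hc; rw [← hta] at hc ⊢; exact P.top_spec c hc
  have topP' : ∀ c, c ≠ b → P'.rel b c := by
    intro c hc; rw [← htb] at hc ⊢; exact P'.top_spec c hc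
  have notP : ∀ c, ¬ P.rel c a := by
    intro c hc
    have h' := P.rank_lt_of_rel hc
    have := P.one_le_rank c
    omega
  have notP' : ∀ c, ¬ P'.rel c b := by
    intro c hc
    have h' := P'.rank_lt_of_rel hc
    have := P'.one_le_rank c
    omega
  have m1 : (P.marg s).rank (a s) = 1 := by
    rw [hmargP]
    have hset : {e | P.rel (Function.update a s e) (Function.update a s (a s))} = ∅ := by
      ext e
      simp only [Set.mem_setOf_eq, Set.mem_empty_iff_false, iff_false, hua]
      exact notP _
    rw [hset]; simp
  have m2 : (P'.marg s).rank (b s) = 1 := by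
    rw [hmargP']
    have hset : {e | P'.rel (Function.update a s e) (Function.update a s (b s))} = ∅ := by
      ext e
      simp only [Set.mem_setOf_eq, Set.mem_empty_iff_false, iff_false, hubb]
      exact notP' _
    rw [hset]; simp
  have m3 : (P.marg s).rank (b s) = 2 := by
    rw [hmargP]
    have hset : {e | P.rel (Function.update a s e) (Function.update a s (b s))} = {a s} := by
      ext e
      simp only [Set.mem_setOf_eq, Set.mem_singleton_iff, hubb]
      constructor
      · intro he
        have hlt := P.rank_lt_of_rel he
        have h1e := P.one_le_rank (Function.update a s e)
        have hone : P.rank (Function.update a s e) = 1 := by omega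
        have heq : Function.update a s e = a := (P.eq_top_of_rank_eq_one hone).trans hta
        have := congrFun heq s
        rwa [hus] at this
      · rintro rfl
        rw [hua]
        exact topP b hab.symm
    rw [hset, Set.ncard_singleton]
  have m4 : (P'.marg s).rank (a s) = 2 := by
    rw [hmargP']
    have hset : {e | P'.rel (Function.update a s e) (Function.update a s (a s))} = {b s} := by
      ext e
      simp only [Set.mem_setOf_eq, Set.mem_singleton_iff, hua]
      constructor
      · intro he
        have hlt := P'.rank_lt_of_rel he
        have h1e := P'.one_le_rank (Function.update a s e)
        have hone : P'.rank (Function.update a s e) = 1 := by omega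
        have heq : Function.update a s e = b := (P'.eq_top_of_rank_eq_one hone).trans htb
        have := congrFun heq s
        rwa [hus] at this
      · rintro rfl
        rw [hubb]
        exact topP' a hab
    rw [hset, Set.ncard_singleton]
  have m5 : ∀ d : A s, d ≠ a s → d ≠ b s → (P.marg s).rank d = (P'.marg s).rank d := by
    intro d hda hdb
    rw [hmargP, hmargP']
    have hud_ne_a : Function.update a s d ≠ a := fun h => hda (by
      have := congrFun h s; rwa [hus] at this)
    have hud_ne_b : Function.update a s d ≠ b := fun h => hdb (by
      have := congrFun h s; rwa [hus] at this)
    have hrd : P.rank (Function.update a s d) = P'.rank (Function.update a s d) :=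
      h3 _ (by rw [hus]; exact hda) (by rw [hus]; exact hdb)
    have hrd3 : 3 ≤ P.rank (Function.update a s d) := by
      have h1' := P.one_le_rank (Function.update a s d)
      have hne1 : P.rank (Function.update a s d) ≠ 1 := fun h =>
        hud_ne_a ((P.eq_top_of_rank_eq_one h).trans hta)
      have hne2 : P.rank (Function.update a s d) ≠ 2 := fun h =>
        hud_ne_b (P.rank_injective (h.trans h1.symm))
      omega
    have hsets : {e | P.rel (Function.update a s e) (Function.update a s d)} =
        {e | P'.rel (Function.update a s e) (Function.update a s d)} := by
      ext e
      simp only [Set.mem_setOf_eq]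
      rcases eq_or_ne e (a s) with rfl | hea
      · rw [hua]
        constructor
        · intro _; exact P'.rel_of_rank_lt (by omega)
        · intro _; exact topP _ hud_ne_a
      rcases eq_or_ne e (b s) with rfl | heb
      · rw [hubb]
        constructor
        · intro _; exact topP' _ hud_ne_b
        · intro _; exact P.rel_of_rank_lt (by omega)
      · have hre : P.rank (Function.update a s e) = P'.rank (Function.update a s e) :=
          h3 _ (by rw [hus]; exact hea) (by rw [hus]; exact heb)
        rw [P.rel_iff_rank_lt, P'.rel_iff_rank_lt, hre, hrd]
    rw [hsets]
  exact ⟨hs, P.marg s, ⟨P, hP, rfl⟩, P'.marg s, ⟨P', hP', rfl⟩, m1, m3, m2, m4, m5⟩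

theorem key_edge {D : Set (Pref (∀ s, A s))} {s : Fin m} {P P' : Pref (∀ s, A s)}
    (hP : P ∈ D) (hP' : P' ∈ D) (hadj : AdjEdge P P')
    (hoff : ∀ t, t ≠ s → P.top t = P'.top t)
    (hs : P.top s ≠ P'.top s) :
    scEdge (margDomain D s) (P.top s) (P'.top s) := by
  have hra : P.rank P.top = 1 := P.rank_top
  have hab : P.top ≠ P'.top := fun h => hs (congrFun h s)
  have hmain : P.rank P'.top = 2 ∧ P'.rank P.top = 2 ∧
      ∀ c : ∀ t, A t, c s ≠ P.top s → c s ≠ P'.top s → P.rank c = P'.rank c := by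
    cases hadj with
    | inl hA =>
      obtain ⟨a₀, b₀, hne, hb₀, hb₀', ha₀', hoth⟩ := hA
      have haa : a₀ = P.top := by
        by_contra hne'
        rcases eq_or_ne P.top b₀ with h | h
        · rw [← h, hra] at hb₀
          have := P.one_le_rank a₀
          omega
        · have h4 := hoth P.top (fun hh => hne' hh.symm) h
          rw [hra] at h4
          exact hab (P'.eq_top_of_rank_eq_one h4.symm)
      rw [haa, hra] at hb₀ hb₀' ha₀'
      have hbb : b₀ = P'.top := P'.eq_top_of_rank_eq_one hb₀'
      rw [hbb] at hb₀ hoth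
      refine ⟨by omega, by omega, ?_⟩
      intro c hca hcb
      exact hoth c (fun h => hca (by rw [h, haa])) (fun h => hcb (by rw [h]))
    | inr hAP =>
      obtain ⟨-, -, t, a₀, b₀, hne, hsw, hoth⟩ := hAP
      have hta : P.top t = a₀ := by
        by_contra hne'
        rcases eq_or_ne (P.top t) b₀ with h | h
        · have heq : Function.update P.top t b₀ = P.top := by
            rw [← h]; exact Function.update_eq_self t P.top
          have h5 := (hsw P.top).1
          rw [heq, hra] at h5
          have := P.one_le_rank (Function.update P.top t a₀)
          omega
        · have h4 := hoth P.top hne' h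
          rw [hra] at h4
          exact hab (P'.eq_top_of_rank_eq_one h4.symm)
      have hupd : Function.update P.top t a₀ = P.top := by
        rw [← hta]; exact Function.update_eq_self t P.top
      have hb : Function.update P.top t b₀ = P'.top := by
        apply P'.eq_top_of_rank_eq_one
        have h5 := (hsw P.top).2.1
        rwa [hupd, hra] at h5
      have hts : t = s := by
        by_contra htne
        have h6 := hoff t htne
        rw [← hb, Function.update_self] at h6
        rw [h6] at hta
        exact hne hta.symm
      subst hts
      have htops' : P'.top t = b₀ := by rw [← hb, Function.update_self]
      refine ⟨?_, ?_, ?_⟩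
      · have h5 := (hsw P.top).1
        rw [hupd, hra, hb] at h5
        omega
      · have h5 := (hsw P.top).2.2
        rw [hupd, hra] at h5
        omega
      · intro c hca hcb
        exact hoth c (by rwa [← hta]) (by rwa [← htops'])
  exact stepB hP hP' rfl rfl hoff hs hmain.1 hmain.2.1 hmain.2.2

end AuxKey

section AuxGraph

/-- The graph `G_≈` as a `SimpleGraph`. -/
def scGraph {β : Type u} (E : Set (Pref β)) : SimpleGraph β where
  Adj := scEdge E
  symm := ⟨by
    rintro x y ⟨hxy, Q, hQ, Q', hQ', r1, r2, r3, r4, r5⟩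
    exact ⟨hxy.symm, Q', hQ', Q, hQ, r3, r4, r1, r2, fun z h1 h2 => (r5 z h2 h1).symm⟩⟩
  loopless := ⟨fun x h => h.1 rfl⟩

theorem chain'_imp_mem {β : Type u} {R S : β → β → Prop} :
    ∀ l : List β, List.Chain' R l → (∀ a ∈ l, ∀ b ∈ l, R a b → S a b) → List.Chain' S l := by
  intro l
  induction l with
  | nil => intro _ _; exact List.isChain_nil
  | cons a t ih =>
    intro h hm
    cases t with
    | nil => exact List.isChain_singleton a
    | cons b t' =>
      simp only [List.Chain', List.isChain_cons_cons] at h ⊢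
      exact ⟨hm a (by simp) b (by simp) h.1,
        ih h.2 (fun x hx y hy hr => hm x (by simp [hx]) y (by simp [hy]) hr)⟩

theorem reach_of_chain' {β : Type u} (G : SimpleGraph β) :
    ∀ l : List β, List.Chain' (fun u v => u = v ∨ G.Adj u v) l →
      ∀ x y, l.head? = some x → l.getLast? = some y → G.Reachable x y := by
  intro l
  induction l with
  | nil => intro _ x y hx _; simp at hx
  | cons a t ih =>
    intro h x y hx hy
    have hxa : a = x := by simpa using hx
    subst hxa
    cases t with
    | nil =>
      have : a = y := by simpa using hy
      subst this
      exact SimpleGraph.Reachable.refl a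
    | cons b t' =>
      simp only [List.Chain', List.isChain_cons_cons] at h
      rw [List.getLast?_cons_cons] at hy
      have hr : G.Reachable b y := ih h.2 b y rfl hy
      rcases h.1 with rfl | hadj
      · exact hr
      · exact (hadj.reachable).trans hr

theorem exists_isPath_of_reachable {β : Type u} (G : SimpleGraph β) {x y : β}
    (hxy : x ≠ y) (h : G.Reachable x y) :
    ∃ l : List β, IsPath G.Adj Set.univ x y l := by
  classical
  obtain ⟨w⟩ := h
  let p := w.toPath
  refine ⟨(p : G.Walk x y).support, ?_, p.2.support_nodup, ?_, ?_,
    fun z _ => Set.mem_univ z, SimpleGraph.Walk.isChain_adj_support _⟩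
  · have hx := SimpleGraph.Walk.start_mem_support (p : G.Walk x y)
    have hy' := SimpleGraph.Walk.end_mem_support (p : G.Walk x y)
    rcases hL : (p : G.Walk x y).support with _ | ⟨u, _ | ⟨v, t⟩⟩
    · rw [hL] at hx; simp at hx
    · rw [hL] at hx hy'
      simp at hx hy'
      exact absurd (hx.trans hy'.symm) hxy
    · simp
  · rw [SimpleGraph.Walk.support_eq_cons]; rfl
  · rw [List.getLast?_eq_getLast_of_ne_nil (SimpleGraph.Walk.support_ne_nil _)]
    exact congrArg some (SimpleGraph.Walk.getLast_support _)

end AuxGraph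


/-- On a rich decomposable domain, the graph `G_≈^{A^s}` is connected. -/
theorem stmt_14 {m : ℕ} (hm : 2 ≤ m) {A : Fin m → Type u}
    [∀ s, Fintype (A s)] [∀ s, Nonempty (A s)]
    (hcard : ∀ s, 2 ≤ Fintype.card (A s))
    (D : Set (Pref (∀ s, A s)))
    (hrich : RichDomain D)
    (hdec : DecomposableDomain D) :
    ∀ s : Fin m, GraphConnectedOn (scEdge (margDomain D s)) Set.univ := by
  obtain ⟨hmin, hdiv, hint, hext⟩ := hrich
  intro s x _ y _ hxy
  have z0 : ∀ t, A t := fun t => Classical.arbitrary _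
  obtain ⟨P, hP, hPa⟩ := hmin (Function.update z0 s x)
  obtain ⟨P', hP', hPb⟩ := hmin (Function.update z0 s y)
  have hPsx : P.top s = x := by rw [hPa]; exact Function.update_self s x z0
  have hPsy : P'.top s = y := by rw [hPb]; exact Function.update_self s y z0
  have hoffPP : ∀ t, t ≠ s → P.top t = P'.top t := by
    intro t ht
    rw [hPa, hPb, Function.update_of_ne ht, Function.update_of_ne ht]
  have htne : P.top ≠ P'.top := fun h => hxy (by rw [← hPsx, ← hPsy, h])
  have hsim : SimilarAt P.top P'.top s := ⟨by rw [hPsx, hPsy]; exact hxy, hoffPP⟩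
  obtain ⟨l, ⟨hlen, hnd, hhead, hlast, hmemD, hchain⟩, htops⟩ :=
    (hext P hP P' hP' htne).2 s hsim
  have hchainS : List.Chain' (fun Q Q' : Pref (∀ t, A t) =>
      Pref.top Q s = Pref.top Q' s ∨
        (scGraph (margDomain D s)).Adj (Pref.top Q s) (Pref.top Q' s)) l := by
    apply chain'_imp_mem l hchain
    intro Q hQ Q' hQ' hadj
    have hoff' : ∀ t, t ≠ s → Pref.top Q t = Pref.top Q' t := fun t ht =>
      (htops Q hQ t ht).trans (htops Q' hQ' t ht).symm
    rcases eq_or_ne (Pref.top Q s) (Pref.top Q' s) with h | h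
    · exact Or.inl h
    · exact Or.inr (key_edge (hmemD Q hQ) (hmemD Q' hQ') hadj hoff' h)
  have hchainL : List.Chain' (fun u v => u = v ∨ (scGraph (margDomain D s)).Adj u v)
      (l.map (fun Q : Pref (∀ t, A t) => Pref.top Q s)) := by
    simp only [List.Chain', List.isChain_map]; exact hchainS
  have hreach : (scGraph (margDomain D s)).Reachable x y := by
    apply reach_of_chain' _ _ hchainL x y
    · rw [List.head?_map, hhead]; simp [hPsx]
    · rw [List.getLast?_map, hlast]; simp [hPsy]
  exact exists_isPath_of_reachable _ hxy hreach
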